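/- Let k be a field, n a natural number, a : Fin n → ℤ weights with a i ≠ 0 for all i, and N ∈ ℤ with N > a i for every i. Let x : Fin n → k be a nonzero vector and (z₀, z₁) ∈ k × k a nonzero pair, and define the antidiagonal weight set Π_A(x, z₀, z₁) = {a i : x i ≠ 0 and z₀ ≠ 0} ∪ {a i − N : x i ≠ 0 and z₁ ≠ 0}. Then Π_A(x, z₀, z₁) fails to contain both a positive and a negative integer if and only if exactly one of the following three cases occurs: (i) z₀ = 0; (ii) z₁ = 0 and the set {a i : x i ≠ 0} consists entirely of positive integers or entirely of negative integers; (iii) z₀ ≠ 0, z₁ ≠ 0, and the set {a i : x i ≠ 0} consists entirely of negative integers. -/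
import Mathlib


/-- Classification of the unstable points of `X × ℙ¹` for the antidiagonal
torus: with weights `a i ≠ 0`, `N > a i` for all `i`, `x` a nonzero vector and `(z₀, z₁)` a
nonzero pair, the antidiagonal weight set
`Π_A(x,z₀,z₁) = {a i : x i ≠ 0 ∧ z₀ ≠ 0} ∪ {a i - N : x i ≠ 0 ∧ z₁ ≠ 0}`
fails to contain both a positive and a negative integer if and only if exactly one of the
following occurs:
(i) `z₀ = 0`;
(ii) `z₁ = 0` and `{a i : x i ≠ 0}` consists entirely of positive or entirely of negative
integers;
(iii) `z₀ ≠ 0`, `z₁ ≠ 0`, and `{a i : x i ≠ 0}` consists entirely of negative integers. -/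
theorem antidiagonal_unstable_projective (k : Type*) [Field k] (n : ℕ) (a : Fin n → ℤ)
    (ha : ∀ i, a i ≠ 0) (N : ℤ) (hN : ∀ i, a i < N)
    (x : Fin n → k) (hx : x ≠ 0) (z₀ z₁ : k) (hz : (z₀, z₁) ≠ (0, 0)) :
    (¬ ((∃ m ∈ ({m : ℤ | ∃ i, x i ≠ 0 ∧ z₀ ≠ 0 ∧ m = a i} ∪
          {m : ℤ | ∃ i, x i ≠ 0 ∧ z₁ ≠ 0 ∧ m = a i - N}), 0 < m) ∧
        (∃ m ∈ ({m : ℤ | ∃ i, x i ≠ 0 ∧ z₀ ≠ 0 ∧ m = a i} ∪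
          {m : ℤ | ∃ i, x i ≠ 0 ∧ z₁ ≠ 0 ∧ m = a i - N}), m < 0))) ↔
    ((z₀ = 0 ∧
        ¬ (z₁ = 0 ∧ ((∀ i, x i ≠ 0 → 0 < a i) ∨ (∀ i, x i ≠ 0 → a i < 0))) ∧
        ¬ (z₀ ≠ 0 ∧ z₁ ≠ 0 ∧ (∀ i, x i ≠ 0 → a i < 0))) ∨
     (¬ (z₀ = 0) ∧
        (z₁ = 0 ∧ ((∀ i, x i ≠ 0 → 0 < a i) ∨ (∀ i, x i ≠ 0 → a i < 0))) ∧
        ¬ (z₀ ≠ 0 ∧ z₁ ≠ 0 ∧ (∀ i, x i ≠ 0 → a i < 0))) ∨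
     (¬ (z₀ = 0) ∧
        ¬ (z₁ = 0 ∧ ((∀ i, x i ≠ 0 → 0 < a i) ∨ (∀ i, x i ≠ 0 → a i < 0))) ∧
        (z₀ ≠ 0 ∧ z₁ ≠ 0 ∧ (∀ i, x i ≠ 0 → a i < 0)))) := by

  obtain ⟨i₀, hi₀⟩ : ∃ i, x i ≠ 0 := by
    by_contra h; push_neg at h; exact hx (funext fun i => h i)
  by_cases h0 : z₀ = 0 <;> by_cases h1 : z₁ = 0
  · exact absurd (by simp [h0, h1]) hz
  · constructor
    · intro _
      exact Or.inl ⟨h0, fun h => h1 h.1, fun h => h.1 h0⟩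
    · rintro _ ⟨⟨m, hm, hmpos⟩, -⟩
      rcases hm with ⟨i, hxi, hz0, rfl⟩ | ⟨i, hxi, _, rfl⟩
      · exact hz0 h0
      · have := hN i; omega
  · -- z₀ ≠ 0, z₁ = 0 : set is {a i : x i ≠ 0}
    have hset : ∀ m : ℤ, (m ∈ ({m : ℤ | ∃ i, x i ≠ 0 ∧ z₀ ≠ 0 ∧ m = a i} ∪
        {m : ℤ | ∃ i, x i ≠ 0 ∧ z₁ ≠ 0 ∧ m = a i - N})) ↔ ∃ i, x i ≠ 0 ∧ m = a i := by
      intro m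
      simp only [Set.mem_union, Set.mem_setOf_eq]
      constructor
      · rintro (⟨i, hxi, _, rfl⟩ | ⟨i, hxi, hz, rfl⟩)
        · exact ⟨i, hxi, rfl⟩
        · exact absurd h1 hz
      · rintro ⟨i, hxi, rfl⟩; exact Or.inl ⟨i, hxi, h0, rfl⟩
    simp only [hset]
    constructor
    · intro h
      refine Or.inr (Or.inl ⟨h0, ⟨h1, ?_⟩, fun hc => hc.2.1 h1⟩)
      by_cases hp : ∀ i, x i ≠ 0 → 0 < a i
      · exact Or.inl hp
      · push_neg at hp
        obtain ⟨j, hxj, hj⟩ := hp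
        have hjneg : a j < 0 := lt_of_le_of_ne hj (ha j)
        refine Or.inr fun i hxi => ?_
        by_contra hc
        exact h ⟨⟨a i, ⟨i, hxi, rfl⟩, by have := ha i; omega⟩, ⟨a j, ⟨j, hxj, rfl⟩, hjneg⟩⟩
    · rintro (⟨hc, _, _⟩ | ⟨_, ⟨_, hsign⟩, _⟩ | ⟨_, _, _, hc, _⟩)
      · exact absurd hc h0
      · rintro ⟨⟨m, ⟨i, hxi, rfl⟩, hmp⟩, ⟨m', ⟨j, hxj, rfl⟩, hmn⟩⟩
        rcases hsign with hs | hs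
        · exact absurd (hs j hxj) (by omega)
        · exact absurd (hs i hxi) (by omega)
      · exact absurd h1 hc
  · -- z₀ ≠ 0, z₁ ≠ 0
    constructor
    · intro h
      refine Or.inr (Or.inr ⟨h0, fun hc => h1 hc.1, h0, h1, fun i hxi => ?_⟩)
      by_contra hc
      have hia : 0 < a i := lt_of_le_of_ne (by omega) (Ne.symm (ha i))
      exact h ⟨⟨a i, Or.inl ⟨i, hxi, h0, rfl⟩, hia⟩,
        ⟨a i₀ - N, Or.inr ⟨i₀, hi₀, h1, rfl⟩, by have := hN i₀; omega⟩⟩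
    · rintro (⟨hc, _, _⟩ | ⟨_, ⟨hc, _⟩, _⟩ | ⟨_, _, _, _, hall⟩)
      · exact absurd hc h0
      · exact absurd hc h1
      · rintro ⟨⟨m, hm, hmp⟩, -⟩
        rcases hm with ⟨i, hxi, _, rfl⟩ | ⟨i, hxi, _, rfl⟩
        · exact absurd (hall i hxi) (by omega)
        · have := hN i; omega
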